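/- Let t ∈ ℝ^{n+1} be one of the rows t_1,...,t_n forming S = Σ_{k=1}^n t_k t_k^T, and let c > 0. Then t^T (S + cI)^{-2} t is bounded above by a constant depending only on t_1,...,t_n (uniformly in c > 0). -/

import Mathlib

open Matrix

theorem diag_quadratic_form_uniformly_bounded (n : ℕ)
    (t : Fin n → (Fin (n + 1) → ℝ)) (i : Fin n) :
    ∃ Q : ℝ, ∀ c : ℝ, 0 < c →
      t i ⬝ᵥ (((∑ k, vecMulVec (t k) (t k)) + c • (1 : Matrix (Fin (n + 1)) (Fin (n + 1)) ℝ))⁻¹ *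
          ((∑ k, vecMulVec (t k) (t k)) + c • (1 : Matrix (Fin (n + 1)) (Fin (n + 1)) ℝ))⁻¹).mulVec (t i)
        ≤ Q := by
  classical
  set S : Matrix (Fin (n+1)) (Fin (n+1)) ℝ := ∑ k, vecMulVec (t k) (t k) with hSdef
  have hmv : ∀ (a x : Fin (n+1) → ℝ), vecMulVec a a *ᵥ x = (a ⬝ᵥ x) • a := by
    intro a x
    funext b
    simp [vecMulVec_apply, mulVec, dotProduct, Finset.mul_sum, mul_comm, mul_left_comm]
  have hsumv : ∀ x : Fin (n+1) → ℝ, S *ᵥ x = ∑ k, vecMulVec (t k) (t k) *ᵥ x := by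
    intro x
    funext b
    simp only [hSdef, mulVec, dotProduct, Matrix.sum_apply, Finset.sum_mul, Finset.sum_apply]
    rw [Finset.sum_comm]
  have hquad : ∀ x : Fin (n+1) → ℝ, x ⬝ᵥ S *ᵥ x = ∑ k, (t k ⬝ᵥ x)^2 := by
    intro x
    have hs : S *ᵥ x = ∑ k, (t k ⬝ᵥ x) • t k := by
      rw [hsumv]; exact Finset.sum_congr rfl fun k _ => hmv _ _
    rw [hs]
    simp only [dotProduct, Finset.sum_apply, Pi.smul_apply, smul_eq_mul, Finset.mul_sum]
    rw [Finset.sum_comm]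
    refine Finset.sum_congr rfl fun k _ => ?_
    rw [sq, Finset.mul_sum]
    exact Finset.sum_congr rfl fun j _ => by ring
  have hpsd : S.PosSemidef := by
    refine posSemidef_iff_dotProduct_mulVec.mpr ⟨?_, ?_⟩
    · show Sᴴ = S
      ext a b
      simp only [hSdef, conjTranspose_apply, Matrix.sum_apply, vecMulVec_apply, star_trivial]
      exact Finset.sum_congr rfl fun k _ => mul_comm _ _
    · intro x
      rw [show star x = x from rfl, hquad]
      exact Finset.sum_nonneg fun k _ => sq_nonneg _
  have hS : S.IsHermitian := hpsd.1
  have hev : ∀ j, 0 ≤ hS.eigenvalues j := hpsd.eigenvalues_nonneg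
  set U : Matrix (Fin (n+1)) (Fin (n+1)) ℝ := (hS.eigenvectorUnitary : Matrix (Fin (n+1)) (Fin (n+1)) ℝ) with hUdef
  set μ : Fin (n+1) → ℝ := hS.eigenvalues with hμdef
  have hU1 : U * star U = 1 := Unitary.coe_mul_star_self hS.eigenvectorUnitary
  have hU2 : star U * U = 1 := Unitary.coe_star_mul_self hS.eigenvectorUnitary
  have hspec : S = U * diagonal μ * star U := by
    have := hS.spectral_theorem
    simpa using this
  set w : Fin (n+1) → ℝ := star U *ᵥ t i with hwdef
  have hwzero : ∀ j, μ j = 0 → w j = 0 := by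
    intro j hj
    set v : Fin (n+1) → ℝ := ⇑(hS.eigenvectorBasis j) with hvdef
    have hv0 : S *ᵥ v = 0 := by
      rw [hvdef, hS.mulVec_eigenvectorBasis j, ← hμdef, hj, zero_smul]
    have hsum : ∑ k, (t k ⬝ᵥ v)^2 = 0 := by
      rw [← hquad, hv0, dotProduct_zero]
    have hti : t i ⬝ᵥ v = 0 :=
      pow_eq_zero_iff two_ne_zero |>.mp
        ((Finset.sum_eq_zero_iff_of_nonneg (fun k _ => sq_nonneg (t k ⬝ᵥ v))).mp hsum i
          (Finset.mem_univ i))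
    have hwj : w j = v ⬝ᵥ t i := by
      rw [hwdef]
      simp [mulVec, dotProduct, Matrix.star_apply, hUdef, hvdef]
    rw [hwj, dotProduct_comm, hti]
  refine ⟨∑ j, (if μ j = 0 then 0 else ((μ j)⁻¹)^2 * (w j)^2), ?_⟩
  intro c hc
  have hposd : ∀ j, 0 < μ j + c := fun j => add_pos_of_nonneg_of_pos (hev j) hc
  have h1 : c • (1 : Matrix (Fin (n+1)) (Fin (n+1)) ℝ) = U * diagonal (fun _ => c) * star U := by
    rw [Matrix.smul_one_eq_diagonal]
    symm
    rw [show diagonal (fun _ : Fin (n+1) => c) = c • (1 : Matrix (Fin (n+1)) (Fin (n+1)) ℝ) from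
      (Matrix.smul_one_eq_diagonal c).symm]
    rw [Matrix.mul_smul, Matrix.mul_one, Matrix.smul_mul, hU1, Matrix.smul_one_eq_diagonal]
  have hA : S + c • (1 : Matrix (Fin (n+1)) (Fin (n+1)) ℝ) = U * diagonal (fun j => μ j + c) * star U := by
    rw [hspec, h1, ← Matrix.add_mul, ← Matrix.mul_add, diagonal_add]
  have hAinv : (S + c • (1 : Matrix (Fin (n+1)) (Fin (n+1)) ℝ))⁻¹
      = U * diagonal (fun j => (μ j + c)⁻¹) * star U := by
    apply inv_eq_right_inv
    rw [hA]
    calc U * diagonal (fun j => μ j + c) * star U * (U * diagonal (fun j => (μ j + c)⁻¹) * star U)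
        = U * diagonal (fun j => μ j + c) * (star U * U) * diagonal (fun j => (μ j + c)⁻¹) * star U := by
          simp only [Matrix.mul_assoc]
      _ = 1 := by
          rw [hU2, Matrix.mul_one, Matrix.mul_assoc (U), diagonal_mul_diagonal]
          have : (fun j => (μ j + c) * (μ j + c)⁻¹) = fun _ : Fin (n+1) => (1:ℝ) := by
            funext j; exact mul_inv_cancel₀ (hposd j).ne'
          rw [this, diagonal_one, Matrix.mul_one, hU1]
  have hA2 : (S + c • (1 : Matrix (Fin (n+1)) (Fin (n+1)) ℝ))⁻¹ * (S + c • (1 : Matrix (Fin (n+1)) (Fin (n+1)) ℝ))⁻¹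
      = U * diagonal (fun j => ((μ j + c)⁻¹)^2) * star U := by
    rw [hAinv]
    calc U * diagonal (fun j => (μ j + c)⁻¹) * star U * (U * diagonal (fun j => (μ j + c)⁻¹) * star U)
        = U * diagonal (fun j => (μ j + c)⁻¹) * (star U * U) * diagonal (fun j => (μ j + c)⁻¹) * star U := by
          simp only [Matrix.mul_assoc]
      _ = _ := by
          rw [hU2, Matrix.mul_one, Matrix.mul_assoc (U), diagonal_mul_diagonal]
          have : (fun j => (μ j + c)⁻¹ * (μ j + c)⁻¹) = fun j => ((μ j + c)⁻¹)^2 := by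
            funext j; rw [← sq]
          rw [this]
  rw [hA2]
  have hform : t i ⬝ᵥ (U * diagonal (fun j => ((μ j + c)⁻¹)^2) * star U) *ᵥ t i
      = ∑ j, ((μ j + c)⁻¹)^2 * (w j)^2 := by
    rw [← Matrix.mulVec_mulVec, ← Matrix.mulVec_mulVec, ← hwdef]
    rw [Matrix.dotProduct_mulVec]
    have hvm : t i ᵥ* U = w := by
      rw [hwdef]
      funext j
      simp [vecMul, mulVec, dotProduct, Matrix.star_apply, mul_comm]
    rw [hvm]
    simp only [dotProduct, mulVec_diagonal]
    refine Finset.sum_congr rfl fun j _ => by ring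
  rw [hform]
  refine Finset.sum_le_sum fun j _ => ?_
  by_cases hj : μ j = 0
  · rw [if_pos hj, hwzero j hj]
    simp
  · rw [if_neg hj]
    have hμpos : 0 < μ j := lt_of_le_of_ne (hev j) (Ne.symm hj)
    have h1 : (μ j + c)⁻¹ ≤ (μ j)⁻¹ := inv_anti₀ hμpos (by linarith)
    have h2 : (0:ℝ) ≤ (μ j + c)⁻¹ := inv_nonneg.mpr (hposd j).le
    exact mul_le_mul_of_nonneg_right (pow_le_pow_left₀ h2 h1 2) (sq_nonneg _)
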